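/- arXiv:2309.02023 — 4 statements merged into one kernel-verified Lean document; each statement's English description precedes it below -/
import Mathlib

section
/- For real θ₁, θ₂ one has f(θ₁, θ₂) = 0 if and only if there exist integers p, q such that (θ₁, θ₂) = (2π/3 + 2pπ, −2π/3 + 2qπ) or (θ₁, θ₂) = (−2π/3 + 2pπ, 2π/3 + 2qπ). -/
open Real

/-- `f(θ₁, θ₂) = (1/9)·|1 + exp(i θ₁) + exp(i θ₂)|²`. -/
noncomputable def f (θ₁ θ₂ : ℝ) : ℝ :=
  (1 / 9) * ‖1 + Complex.exp (θ₁ * Complex.I) + Complex.exp (θ₂ * Complex.I)‖ ^ 2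

lemma cos_two_pi_div_three' : Real.cos (2 * π / 3) = -(1 / 2) := by
  have : (2 : ℝ) * π / 3 = π - π / 3 := by ring
  rw [this, Real.cos_pi_sub, Real.cos_pi_div_three]

lemma sin_two_pi_div_three' : Real.sin (2 * π / 3) = Real.sqrt 3 / 2 := by
  have : (2 : ℝ) * π / 3 = π - π / 3 := by ring
  rw [this, Real.sin_pi_sub, Real.sin_pi_div_three]

theorem stmt_1 (θ₁ θ₂ : ℝ) :
    f θ₁ θ₂ = 0 ↔
      ∃ p q : ℤ,
        (θ₁ = 2 * π / 3 + 2 * p * π ∧ θ₂ = -(2 * π / 3) + 2 * q * π) ∨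
        (θ₁ = -(2 * π / 3) + 2 * p * π ∧ θ₂ = 2 * π / 3 + 2 * q * π) := by
  have hsqrt3 : Real.sqrt 3 ≠ 0 := by positivity
  have key : f θ₁ θ₂ = 0 ↔
      (1 + Real.cos θ₁ + Real.cos θ₂ = 0 ∧ Real.sin θ₁ + Real.sin θ₂ = 0) := by
    unfold f
    rw [mul_eq_zero, or_iff_right (by norm_num : (1:ℝ)/9 ≠ 0),
      pow_eq_zero_iff (by norm_num : (2:ℕ) ≠ 0), norm_eq_zero,
      Complex.exp_mul_I, Complex.exp_mul_I,
      ← Complex.ofReal_cos, ← Complex.ofReal_sin, ← Complex.ofReal_cos, ← Complex.ofReal_sin,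
      Complex.ext_iff]
    simp [Complex.cos_ofReal_re, Complex.sin_ofReal_re]
  rw [key]
  constructor
  · rintro ⟨hc, hs⟩
    have hs2 : Real.sin θ₂ = -Real.sin θ₁ := by linarith
    have hc2 : Real.cos θ₂ = -1 - Real.cos θ₁ := by linarith
    have pyth1 := Real.sin_sq_add_cos_sq θ₁
    have pyth2 := Real.sin_sq_add_cos_sq θ₂
    rw [hs2, hc2] at pyth2
    have hcos1 : Real.cos θ₁ = -(1/2) := by nlinarith
    have hcos2 : Real.cos θ₂ = -(1/2) := by linarith
    have h1 : Real.cos θ₁ = Real.cos (2 * π / 3) := by rw [cos_two_pi_div_three']; exact hcos1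
    have h2 : Real.cos θ₂ = Real.cos (2 * π / 3) := by rw [cos_two_pi_div_three']; exact hcos2
    rw [eq_comm, Real.cos_eq_cos_iff] at h1 h2
    obtain ⟨k, hk⟩ := h1
    obtain ⟨m, hm⟩ := h2
    rcases hk with hk | hk <;> rcases hm with hm | hm
    · -- both plus: sin sum = √3 ≠ 0
      exfalso
      rw [hk, hm] at hs
      rw [show (2:ℝ) * k * π + 2 * π / 3 = 2 * π / 3 + k * (2 * π) by ring,
        show (2:ℝ) * m * π + 2 * π / 3 = 2 * π / 3 + m * (2 * π) by ring,
        Real.sin_add_int_mul_two_pi, Real.sin_add_int_mul_two_pi,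
        sin_two_pi_div_three'] at hs
      have : Real.sqrt 3 = 0 := by linarith
      exact hsqrt3 this
    · exact ⟨k, m, Or.inl ⟨by rw [hk]; ring, by rw [hm]; ring⟩⟩
    · exact ⟨k, m, Or.inr ⟨by rw [hk]; ring, by rw [hm]; ring⟩⟩
    · exfalso
      rw [hk, hm] at hs
      rw [show (2:ℝ) * k * π - 2 * π / 3 = -(2 * π / 3) + k * (2 * π) by ring,
        show (2:ℝ) * m * π - 2 * π / 3 = -(2 * π / 3) + m * (2 * π) by ring,
        Real.sin_add_int_mul_two_pi, Real.sin_add_int_mul_two_pi,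
        Real.sin_neg, sin_two_pi_div_three'] at hs
      have : Real.sqrt 3 = 0 := by linarith
      exact hsqrt3 this
  · rintro ⟨p, q, ⟨h1, h2⟩ | ⟨h1, h2⟩⟩ <;> subst h1 <;> subst h2
    · rw [show (2:ℝ) * π / 3 + 2 * (p:ℝ) * π = 2 * π / 3 + p * (2 * π) by ring,
        show -((2:ℝ) * π / 3) + 2 * (q:ℝ) * π = -(2 * π / 3) + q * (2 * π) by ring,
        Real.sin_add_int_mul_two_pi, Real.sin_add_int_mul_two_pi,
        Real.cos_add_int_mul_two_pi, Real.cos_add_int_mul_two_pi,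
        Real.sin_neg, Real.cos_neg, sin_two_pi_div_three', cos_two_pi_div_three']
      constructor <;> ring
    · rw [show -((2:ℝ) * π / 3) + 2 * (p:ℝ) * π = -(2 * π / 3) + p * (2 * π) by ring,
        show (2:ℝ) * π / 3 + 2 * (q:ℝ) * π = 2 * π / 3 + q * (2 * π) by ring,
        Real.sin_add_int_mul_two_pi, Real.sin_add_int_mul_two_pi,
        Real.cos_add_int_mul_two_pi, Real.cos_add_int_mul_two_pi,
        Real.sin_neg, Real.cos_neg, sin_two_pi_div_three', cos_two_pi_div_three']
      constructor <;> ring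
end

section
/- There exist constants C > 0 and ε > 0 such that for every k ∈ ℝ² with ‖k − K‖ ≤ ε one has |f(2π k·v₁, 2π k·v₂) − (π²/3)·‖k − K‖²| ≤ C·‖k − K‖³. -/
open Real

/-- The lattice vector `v₁ = (√3/2, −1/2)` in Euclidean `ℝ²`. -/
noncomputable def v₁ : EuclideanSpace ℝ (Fin 2) := !₂[Real.sqrt 3 / 2, -(1 / 2)]

/-- The lattice vector `v₂ = (√3/2, 1/2)` in Euclidean `ℝ²`. -/
noncomputable def v₂ : EuclideanSpace ℝ (Fin 2) := !₂[Real.sqrt 3 / 2, 1 / 2]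

/-- The Brillouin-zone vertex `K = (0, 2/3)` in Euclidean `ℝ²`. -/
noncomputable def Kpt : EuclideanSpace ℝ (Fin 2) := !₂[0, 2 / 3]

lemma f_eq (θ₁ θ₂ : ℝ) :
    f θ₁ θ₂ = (3 + 2 * Real.cos θ₁ + 2 * Real.cos θ₂ + 2 * Real.cos (θ₁ - θ₂)) / 9 := by
  unfold f
  rw [Complex.sq_norm, Complex.exp_mul_I, Complex.exp_mul_I,
    ← Complex.ofReal_cos, ← Complex.ofReal_sin, ← Complex.ofReal_cos, ← Complex.ofReal_sin,
    Real.cos_sub]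
  simp [Complex.normSq_apply, Complex.cos_ofReal_re, Complex.sin_ofReal_re]
  nlinarith [Real.sin_sq_add_cos_sq θ₁, Real.sin_sq_add_cos_sq θ₂]

lemma cos_shift1 (x : ℝ) : Real.cos (x - 2 * π / 3) = -Real.cos x / 2 + Real.sqrt 3 * Real.sin x / 2 := by
  have h1 : Real.cos (2 * π / 3) = -(1/2) := by
    have h : (2:ℝ) * π / 3 = π - π / 3 := by ring
    rw [h, Real.cos_pi_sub, Real.cos_pi_div_three]
  have h2 : Real.sin (2 * π / 3) = Real.sqrt 3 / 2 := by
    have h : (2:ℝ) * π / 3 = π - π / 3 := by ring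
    rw [h, Real.sin_pi_sub, Real.sin_pi_div_three]
  rw [Real.cos_sub, h1, h2]; ring

lemma cos_shift2 (x : ℝ) : Real.cos (x + 2 * π / 3) = -Real.cos x / 2 - Real.sqrt 3 * Real.sin x / 2 := by
  have h1 : Real.cos (2 * π / 3) = -(1/2) := by
    have h : (2:ℝ) * π / 3 = π - π / 3 := by ring
    rw [h, Real.cos_pi_sub, Real.cos_pi_div_three]
  have h2 : Real.sin (2 * π / 3) = Real.sqrt 3 / 2 := by
    have h : (2:ℝ) * π / 3 = π - π / 3 := by ring
    rw [h, Real.sin_pi_sub, Real.sin_pi_div_three]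
  rw [Real.cos_add, h1, h2]; ring

lemma cos_shift3 (x : ℝ) : Real.cos (x - 4 * π / 3) = -Real.cos x / 2 - Real.sqrt 3 * Real.sin x / 2 := by
  have h : x - 4 * π / 3 = (x + 2 * π / 3) - 2 * π := by ring
  rw [h, Real.cos_sub_two_pi, cos_shift2]

lemma hcos (x : ℝ) (hx : |x| ≤ 1) : |Real.cos x - (1 - x^2/2)| ≤ |x|^3 := by
  have h := Real.cos_bound hx
  have h4 : |x|^4 ≤ |x|^3 := by
    calc |x|^4 = |x|^3 * |x| := by ring
    _ ≤ |x|^3 * 1 := mul_le_mul_of_nonneg_left hx (pow_nonneg (abs_nonneg x) 3)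
    _ = |x|^3 := by ring
  nlinarith [pow_nonneg (abs_nonneg x) 4]

lemma hsin (x : ℝ) (hx : |x| ≤ 1) : |Real.sin x - x| ≤ |x|^3 := by
  have h := Real.sin_bound hx
  have h4 : |x|^4 ≤ |x|^3 := by
    calc |x|^4 = |x|^3 * |x| := by ring
    _ ≤ |x|^3 * 1 := mul_le_mul_of_nonneg_left hx (pow_nonneg (abs_nonneg x) 3)
    _ = |x|^3 := by ring
  have habs : |Real.sin x - x| ≤ |Real.sin x - (x - x^3/6)| + |x^3/6| := by
    calc |Real.sin x - x| = |(Real.sin x - (x - x^3/6)) + (-(x^3/6))| := by ring_nf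
    _ ≤ |Real.sin x - (x - x^3/6)| + |(-(x^3/6))| := abs_add_le _ _
    _ = |Real.sin x - (x - x^3/6)| + |x^3/6| := by rw [abs_neg]
  have hx3 : |x^3/6| = |x|^3/6 := by rw [abs_div, abs_pow]; norm_num
  nlinarith [pow_nonneg (abs_nonneg x) 3, pow_nonneg (abs_nonneg x) 4]

lemma key_ineq (a b : ℝ) (ha : |a| ≤ 1) (hb : |b| ≤ 1) (hab : |a - b| ≤ 1) :
    |(3 - Real.cos a - Real.cos b - Real.cos (a-b)
        + Real.sqrt 3 * (Real.sin a - Real.sin b - Real.sin (a-b))) - (a^2 + b^2 - a*b)|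
      ≤ 3 * (|a|^3 + |b|^3 + |a-b|^3) := by
  have s0 : 0 ≤ Real.sqrt 3 := Real.sqrt_nonneg 3
  have s3 : Real.sqrt 3 ≤ 2 := by
    nlinarith [Real.sq_sqrt (by norm_num : (3:ℝ) ≥ 0)]
  obtain ⟨c1l, c1r⟩ := abs_le.mp (hcos a ha)
  obtain ⟨c2l, c2r⟩ := abs_le.mp (hcos b hb)
  obtain ⟨c3l, c3r⟩ := abs_le.mp (hcos (a-b) hab)
  have m : ∀ x : ℝ, |x| ≤ 1 → |Real.sqrt 3 * (Real.sin x - x)| ≤ 2 * |x|^3 := by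
    intro x hx
    rw [abs_mul, abs_of_nonneg s0]
    calc Real.sqrt 3 * |Real.sin x - x| ≤ 2 * |Real.sin x - x| := by
          nlinarith [abs_nonneg (Real.sin x - x)]
    _ ≤ 2 * |x|^3 := by linarith [hsin x hx]
  obtain ⟨m1l, m1r⟩ := abs_le.mp (m a ha)
  obtain ⟨m2l, m2r⟩ := abs_le.mp (m b hb)
  obtain ⟨m3l, m3r⟩ := abs_le.mp (m (a-b) hab)
  rw [abs_le]
  constructor <;> nlinarith [c1l, c1r, c2l, c2r, c3l, c3r, m1l, m1r, m2l, m2r, m3l, m3r]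

lemma f_near (a b r : ℝ) (hr0 : 0 ≤ r)
    (ha : |a| ≤ 1) (hb : |b| ≤ 1) (hab : |a - b| ≤ 1)
    (har : |a| ≤ 3 * π * r) (hbr : |b| ≤ 3 * π * r) (habr : |a - b| ≤ 2 * π * r)
    (hQ : a^2 + b^2 - a*b = 3 * π^2 * r^2) :
    |f (a - 2*π/3) (b + 2*π/3) - π^2/3 * r^2| ≤ 2000 * r^3 := by
  have hdiff : (a - 2*π/3) - (b + 2*π/3) = (a - b) - 4*π/3 := by ring
  have hfe : f (a - 2*π/3) (b + 2*π/3) - π^2/3 * r^2 =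
      ((3 - Real.cos a - Real.cos b - Real.cos (a-b)
        + Real.sqrt 3 * (Real.sin a - Real.sin b - Real.sin (a-b))) - (a^2 + b^2 - a*b)) / 9 := by
    rw [f_eq, hdiff, cos_shift1, cos_shift2, cos_shift3, hQ]; ring
  rw [hfe]
  have hk := key_ineq a b ha hb hab
  have hpi : π ≤ 3.15 := le_of_lt Real.pi_lt_d2
  have hpi0 : 0 ≤ π := Real.pi_nonneg
  have ca : |a|^3 ≤ (3*π*r)^3 := pow_le_pow_left₀ (abs_nonneg a) har 3
  have cb : |b|^3 ≤ (3*π*r)^3 := pow_le_pow_left₀ (abs_nonneg b) hbr 3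
  have cab : |a-b|^3 ≤ (2*π*r)^3 := pow_le_pow_left₀ (abs_nonneg (a-b)) habr 3
  have hr3 : 0 ≤ r^3 := pow_nonneg hr0 3
  rw [abs_div]
  have h9 : |(9:ℝ)| = 9 := by norm_num
  rw [h9]
  have hpi3 : π^3 ≤ 32 := by nlinarith
  nlinarith [hk, ca, cb, cab]

theorem stmt_4 :
    ∃ C > (0 : ℝ), ∃ ε > (0 : ℝ), ∀ k : EuclideanSpace ℝ (Fin 2), ‖k - Kpt‖ ≤ ε →
      |f (2 * π * (inner ℝ k v₁ : ℝ)) (2 * π * (inner ℝ k v₂ : ℝ)) -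
        (π ^ 2 / 3) * ‖k - Kpt‖ ^ 2| ≤ C * ‖k - Kpt‖ ^ 3 := by
  refine ⟨2000, by norm_num, 1/10, by norm_num, fun k hk => ?_⟩
  set r : ℝ := ‖k - Kpt‖ with hrdef
  have hr0 : 0 ≤ r := norm_nonneg _
  set q1 : ℝ := k 0 with hq1def
  set q2 : ℝ := k 1 - 2/3 with hq2def
  set a : ℝ := π * (Real.sqrt 3 * q1 - q2) with hadef
  set b : ℝ := π * (Real.sqrt 3 * q1 + q2) with hbdef
  have hs0 : 0 ≤ Real.sqrt 3 := Real.sqrt_nonneg 3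
  have hss : Real.sqrt 3 ^ 2 = 3 := Real.sq_sqrt (by norm_num)
  have hs2 : Real.sqrt 3 ≤ 2 := by nlinarith
  have hpi0 : 0 ≤ π := Real.pi_nonneg
  have hpi : π ≤ 3.15 := le_of_lt Real.pi_lt_d2
  have hv1 : 2 * π * (inner ℝ k v₁ : ℝ) = a - 2*π/3 := by
    have h : (inner ℝ k v₁ : ℝ) = k 0 * (Real.sqrt 3 / 2) + k 1 * (-(1/2)) := by
      simp [v₁, PiLp.inner_apply, Fin.sum_univ_two]; ring
    rw [h, hadef, hq1def, hq2def]; ring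
  have hv2 : 2 * π * (inner ℝ k v₂ : ℝ) = b + 2*π/3 := by
    have h : (inner ℝ k v₂ : ℝ) = k 0 * (Real.sqrt 3 / 2) + k 1 * (1/2) := by
      simp [v₂, PiLp.inner_apply, Fin.sum_univ_two]; ring
    rw [h, hbdef, hq1def, hq2def]; ring
  have hr2 : r^2 = q1^2 + q2^2 := by
    rw [hrdef, EuclideanSpace.norm_eq, Real.sq_sqrt (by positivity)]
    simp [Kpt, Fin.sum_univ_two, sq_abs, hq1def, hq2def]
  have hq1r : |q1| ≤ r := by
    have h := Real.sqrt_le_sqrt (show q1^2 ≤ r^2 by nlinarith [sq_nonneg q2])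
    rwa [Real.sqrt_sq_eq_abs, Real.sqrt_sq hr0] at h
  have hq2r : |q2| ≤ r := by
    have h := Real.sqrt_le_sqrt (show q2^2 ≤ r^2 by nlinarith [sq_nonneg q1])
    rwa [Real.sqrt_sq_eq_abs, Real.sqrt_sq hr0] at h
  have hsq1 : |Real.sqrt 3 * q1| ≤ 2 * r := by
    rw [abs_mul, abs_of_nonneg hs0]
    calc Real.sqrt 3 * |q1| ≤ 2 * |q1| :=
          mul_le_mul_of_nonneg_right hs2 (abs_nonneg q1)
    _ ≤ 2 * r := by linarith
  have habs1 : |Real.sqrt 3 * q1 - q2| ≤ 3 * r := by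
    calc |Real.sqrt 3 * q1 - q2| ≤ |Real.sqrt 3 * q1| + |q2| := abs_sub _ _
    _ ≤ 3 * r := by linarith
  have habs2 : |Real.sqrt 3 * q1 + q2| ≤ 3 * r := by
    calc |Real.sqrt 3 * q1 + q2| ≤ |Real.sqrt 3 * q1| + |q2| := abs_add_le _ _
    _ ≤ 3 * r := by linarith
  have har : |a| ≤ 3 * π * r := by
    rw [hadef, abs_mul, abs_of_nonneg hpi0]
    calc π * |Real.sqrt 3 * q1 - q2| ≤ π * (3 * r) :=
          mul_le_mul_of_nonneg_left habs1 hpi0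
    _ = 3 * π * r := by ring
  have hbr : |b| ≤ 3 * π * r := by
    rw [hbdef, abs_mul, abs_of_nonneg hpi0]
    calc π * |Real.sqrt 3 * q1 + q2| ≤ π * (3 * r) :=
          mul_le_mul_of_nonneg_left habs2 hpi0
    _ = 3 * π * r := by ring
  have habr : |a - b| ≤ 2 * π * r := by
    have h : a - b = -(2*π) * q2 := by rw [hadef, hbdef]; ring
    rw [h, abs_mul, abs_neg, abs_of_nonneg (by positivity : (0:ℝ) ≤ 2*π)]
    exact mul_le_mul_of_nonneg_left hq2r (by positivity)
  have hrsmall : r ≤ 1/10 := hk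
  have hpir : π * r ≤ 3.15 * (1/10) := mul_le_mul hpi hrsmall hr0 (by norm_num)
  have ha1 : |a| ≤ 1 := by
    calc |a| ≤ 3 * π * r := har
    _ = 3 * (π * r) := by ring
    _ ≤ 3 * (3.15 * (1/10)) := by linarith
    _ ≤ 1 := by norm_num
  have hb1 : |b| ≤ 1 := by
    calc |b| ≤ 3 * π * r := hbr
    _ = 3 * (π * r) := by ring
    _ ≤ 3 * (3.15 * (1/10)) := by linarith
    _ ≤ 1 := by norm_num
  have hab1 : |a - b| ≤ 1 := by
    calc |a - b| ≤ 2 * π * r := habr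
    _ = 2 * (π * r) := by ring
    _ ≤ 2 * (3.15 * (1/10)) := by linarith
    _ ≤ 1 := by norm_num
  have hQ : a^2 + b^2 - a*b = 3 * π^2 * r^2 := by
    rw [hadef, hbdef]
    linear_combination π^2*q1^2*hss - 3*π^2*hr2
  rw [hv1, hv2]
  exact f_near a b r hr0 ha1 hb1 hab1 har hbr habr hQ
end

section
/- There exist constants C > 0 and ε > 0 such that for every k ∈ ℝ² with ‖k − K‖ ≤ ε one has |arccos(√(f(2π k·v₁, 2π k·v₂))) − (π/2 − (π/√3)·‖k − K‖)| ≤ C·‖k − K‖². (This is the conical, Dirac-point behaviour of the first dispersion surface ω(k)·L = arccos(√(f(2π k·v₁, 2π k·v₂))) of the hexagonal quantum graph near the Brillouin-zone vertex K.) -/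
open Real

lemma sin_lower {x : ℝ} (h0 : 0 ≤ x) (h1 : x ≤ 1) : x - x^3/4 ≤ Real.sin x := by
  rcases eq_or_lt_of_le h0 with h|h
  · simp [← h]
  · have := Real.sin_gt_sub_cube h; nlinarith [pow_pos h 3]

lemma sin_bilip {x y : ℝ} (hy0 : 0 ≤ y) (hyx : y ≤ x) (hx : x ≤ 1/2) :
    x - y ≤ 4 * (Real.sin x - Real.sin y) := by
  have hs := Real.sin_sub_sin x y
  have ht0 : (0:ℝ) ≤ (x - y)/2 := by linarith
  have ht1 : (x - y)/2 ≤ 1 := by linarith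
  have h1 := sin_lower ht0 ht1
  have h2 := Real.one_sub_sq_div_two_le_cos (x := (x + y)/2)
  have hcube : ((x - y)/2)^3 ≤ ((x - y)/2)^1 := pow_le_pow_of_le_one ht0 ht1 (by norm_num)
  rw [pow_one] at hcube
  have hsinge : (x - y)/4 ≤ Real.sin ((x-y)/2) := by nlinarith
  have hcosge : (7:ℝ)/8 ≤ Real.cos ((x+y)/2) := by nlinarith
  nlinarith [mul_le_mul hsinge hcosge (by norm_num) (le_trans (by linarith) hsinge)]

lemma complex_est (a b : ℝ) (ha : |a| ≤ 1) (hb : |b| ≤ 1) :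
    |‖1 + Complex.exp ((-(2*π/3) + a : ℝ) * Complex.I)
        + Complex.exp ((2*π/3 + b : ℝ) * Complex.I)‖
      - Real.sqrt ((a+b)^2/4 + 3*(b-a)^2/4)| ≤ a^2 + b^2 := by
  have h3 : Real.sqrt 3 ^ 2 = 3 := Real.sq_sqrt (by norm_num)
  set u : ℂ := ((-(1/2) : ℝ) : ℂ) + ((Real.sqrt 3 / 2 : ℝ) : ℂ) * Complex.I with hu_def
  set v : ℂ := ((-(1/2) : ℝ) : ℂ) + ((-(Real.sqrt 3 / 2) : ℝ) : ℂ) * Complex.I with hv_def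
  have hpi : (2*π/3 : ℝ) = π - π/3 := by ring
  have hcos : Real.cos (2*π/3) = -(1/2) := by
    rw [hpi, Real.cos_pi_sub, Real.cos_pi_div_three]
  have hsin : Real.sin (2*π/3) = Real.sqrt 3 / 2 := by
    rw [hpi, Real.sin_pi_sub, Real.sin_pi_div_three]
  have hu : Complex.exp (((2*π/3 : ℝ) : ℂ) * Complex.I) = u := by
    rw [Complex.exp_mul_I, ← Complex.ofReal_cos, ← Complex.ofReal_sin, hcos, hsin, hu_def]
  have hv : Complex.exp (((-(2*π/3) : ℝ) : ℂ) * Complex.I) = v := by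
    rw [Complex.exp_mul_I, ← Complex.ofReal_cos, ← Complex.ofReal_sin, Real.cos_neg,
      Real.sin_neg, hcos, hsin, hv_def]
  have hsplit1 : Complex.exp (((-(2*π/3) + a : ℝ) : ℂ) * Complex.I)
      = v * Complex.exp ((a : ℂ) * Complex.I) := by
    rw [← hv, ← Complex.exp_add]; congr 1; push_cast; ring
  have hsplit2 : Complex.exp (((2*π/3 + b : ℝ) : ℂ) * Complex.I)
      = u * Complex.exp ((b : ℂ) * Complex.I) := by
    rw [← hu, ← Complex.exp_add]; congr 1; push_cast; ring
  set Ea := Complex.exp ((a : ℂ) * Complex.I) with hEa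
  set Eb := Complex.exp ((b : ℂ) * Complex.I) with hEb
  set z : ℂ := 1 + v * Ea + u * Eb with hz_def
  set w : ℂ := Complex.I * (v * a + u * b) with hw_def
  have huv : 1 + u + v = 0 := by rw [hu_def, hv_def]; push_cast; ring
  have hzw : z - w = v * (Ea - 1 - (a:ℂ)*Complex.I) + u * (Eb - 1 - (b:ℂ)*Complex.I) := by
    rw [hz_def, hw_def]; linear_combination huv
  have habsu : ‖u‖ = 1 := by
    rw [hu_def, Complex.norm_def, Complex.normSq_add_mul_I]
    rw [show (-(1/2):ℝ)^2 + (Real.sqrt 3/2)^2 = 1 by linear_combination (1/4) * h3]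
    exact Real.sqrt_one
  have habsv : ‖v‖ = 1 := by
    rw [hv_def, Complex.norm_def, Complex.normSq_add_mul_I]
    rw [show (-(1/2):ℝ)^2 + (-(Real.sqrt 3/2))^2 = 1 by linear_combination (1/4) * h3]
    exact Real.sqrt_one
  have hea : ‖Ea - 1 - (a:ℂ)*Complex.I‖ ≤ a^2 := by
    have h1 : ‖(a:ℂ)*Complex.I‖ = |a| := by
      rw [norm_mul, Complex.norm_I, Complex.norm_real, Real.norm_eq_abs, mul_one]
    have := Complex.norm_exp_sub_one_sub_id_le (x := (a:ℂ)*Complex.I) (by rw [h1]; exact ha)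
    rwa [h1, sq_abs] at this
  have heb : ‖Eb - 1 - (b:ℂ)*Complex.I‖ ≤ b^2 := by
    have h1 : ‖(b:ℂ)*Complex.I‖ = |b| := by
      rw [norm_mul, Complex.norm_I, Complex.norm_real, Real.norm_eq_abs, mul_one]
    have := Complex.norm_exp_sub_one_sub_id_le (x := (b:ℂ)*Complex.I) (by rw [h1]; exact hb)
    rwa [h1, sq_abs] at this
  have hdiff : ‖z - w‖ ≤ a^2 + b^2 := by
    rw [hzw]
    calc ‖_‖ ≤ ‖v * (Ea - 1 - (a:ℂ)*Complex.I)‖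
          + ‖u * (Eb - 1 - (b:ℂ)*Complex.I)‖ := norm_add_le _ _
      _ = ‖Ea - 1 - (a:ℂ)*Complex.I‖ + ‖Eb - 1 - (b:ℂ)*Complex.I‖ := by
          rw [norm_mul, norm_mul, habsu, habsv, one_mul, one_mul]
      _ ≤ a^2 + b^2 := add_le_add hea heb
  have habsw : ‖w‖ = Real.sqrt ((a+b)^2/4 + 3*(b-a)^2/4) := by
    have hw2 : w = Complex.I * (((-(a+b)/2 : ℝ) : ℂ) + ((Real.sqrt 3/2*(b-a) : ℝ) : ℂ) * Complex.I) := by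
      rw [hw_def, hu_def, hv_def]; push_cast; ring
    rw [hw2, norm_mul, Complex.norm_I, one_mul, Complex.norm_def, Complex.normSq_add_mul_I]
    congr 1
    linear_combination ((b-a)^2/4) * h3
  have tri : |‖z‖ - ‖w‖| ≤ ‖z - w‖ := by
    exact abs_norm_sub_norm_le z w
  rw [hsplit1, hsplit2, ← habsw]
  exact le_trans tri hdiff

set_option maxHeartbeats 1000000 in
theorem stmt_5 :
    ∃ C > (0 : ℝ), ∃ ε > (0 : ℝ), ∀ k : EuclideanSpace ℝ (Fin 2), ‖k - Kpt‖ ≤ ε →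
      |Real.arccos (Real.sqrt (f (2 * π * (inner ℝ k v₁ : ℝ)) (2 * π * (inner ℝ k v₂ : ℝ)))) -
        (π / 2 - (π / Real.sqrt 3) * ‖k - Kpt‖)| ≤ C * ‖k - Kpt‖ ^ 2 := by
  refine ⟨100, by norm_num, 1/100, by norm_num, fun k hk => ?_⟩
  have h3 : Real.sqrt 3 ^ 2 = 3 := Real.sq_sqrt (by norm_num)
  have hs3pos : (0:ℝ) < Real.sqrt 3 := by positivity
  have hs3lo : (1.7:ℝ) ≤ Real.sqrt 3 := by nlinarith [Real.sqrt_nonneg 3]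
  have hs3hi : Real.sqrt 3 ≤ 2 := by nlinarith [Real.sqrt_nonneg 3]
  have hpilo : (3:ℝ) < π := Real.pi_gt_three
  have hpihi : π < 3.15 := Real.pi_lt_d2
  have hpisq : π^2 ≤ 9.9225 := by nlinarith
  obtain ⟨n, hn_def⟩ : ∃ x : ℝ, ‖k - Kpt‖ = x := ⟨_, rfl⟩
  obtain ⟨p0, hp0_def⟩ : ∃ x : ℝ, (k - Kpt) 0 = x := ⟨_, rfl⟩
  obtain ⟨p1, hp1_def⟩ : ∃ x : ℝ, (k - Kpt) 1 = x := ⟨_, rfl⟩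
  rw [hn_def] at hk ⊢
  have hn0 : 0 ≤ n := hn_def ▸ norm_nonneg _
  have hn100 : n ≤ 1/100 := hk
  have hn2 : n^2 = p0^2 + p1^2 := by
    rw [← hn_def, ← hp0_def, ← hp1_def, EuclideanSpace.norm_eq, Real.sq_sqrt (by positivity)]
    simp [Fin.sum_univ_two, sq_abs]
  have hk0 : k 0 = p0 := by rw [← hp0_def]; simp [Kpt]
  have hk1 : k 1 = p1 + 2/3 := by
    have h := hp1_def
    have h2 : (k - Kpt) 1 = k 1 - 2/3 := by simp [Kpt]
    rw [h2] at h; linarith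
  have hp0n : |p0| ≤ n := by nlinarith [abs_nonneg p0, sq_abs p0, sq_nonneg p1]
  have hp1n : |p1| ≤ n := by nlinarith [abs_nonneg p1, sq_abs p1, sq_nonneg p0]
  set a := π * (Real.sqrt 3 * p0 - p1) with ha_def
  set b := π * (Real.sqrt 3 * p0 + p1) with hb_def
  have hinner1 : (inner ℝ k v₁ : ℝ) = k 0 * (Real.sqrt 3 / 2) + k 1 * (-(1/2)) := by
    simp [PiLp.inner_apply, Fin.sum_univ_two, v₁, RCLike.inner_apply, mul_comm]
  have hinner2 : (inner ℝ k v₂ : ℝ) = k 0 * (Real.sqrt 3 / 2) + k 1 * (1/2) := by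
    simp [PiLp.inner_apply, Fin.sum_univ_two, v₂, RCLike.inner_apply, mul_comm]
  have hth1 : 2 * π * (inner ℝ k v₁ : ℝ) = -(2*π/3) + a := by
    rw [hinner1, hk0, hk1, ha_def]; ring
  have hth2 : 2 * π * (inner ℝ k v₂ : ℝ) = 2*π/3 + b := by
    rw [hinner2, hk0, hk1, hb_def]; ring
  rw [hth1, hth2]
  clear hth1 hth2 hinner1 hinner2 hk0 hk1 hp0_def hp1_def hn_def hk
  clear k
  have hap : |a| ≤ 1 := by
    rw [ha_def, abs_mul, abs_of_pos Real.pi_pos]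
    have h1 : |Real.sqrt 3 * p0 - p1| ≤ Real.sqrt 3 * |p0| + |p1| := by
      calc |Real.sqrt 3 * p0 - p1| ≤ |Real.sqrt 3 * p0| + |p1| := abs_sub _ _
        _ = Real.sqrt 3 * |p0| + |p1| := by rw [abs_mul, abs_of_pos hs3pos]
    have h2 : Real.sqrt 3 * |p0| + |p1| ≤ 3 * n := by
      nlinarith [abs_nonneg p0, abs_nonneg p1]
    calc π * |Real.sqrt 3 * p0 - p1| ≤ 3.15 * (3 * n) :=
          mul_le_mul hpihi.le (h1.trans h2) (abs_nonneg _) (by norm_num)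
      _ ≤ 1 := by nlinarith
  have hbp : |b| ≤ 1 := by
    rw [hb_def, abs_mul, abs_of_pos Real.pi_pos]
    have h1 : |Real.sqrt 3 * p0 + p1| ≤ Real.sqrt 3 * |p0| + |p1| := by
      calc |Real.sqrt 3 * p0 + p1| ≤ |Real.sqrt 3 * p0| + |p1| := abs_add_le _ _
        _ = Real.sqrt 3 * |p0| + |p1| := by rw [abs_mul, abs_of_pos hs3pos]
    have h2 : Real.sqrt 3 * |p0| + |p1| ≤ 3 * n := by
      nlinarith [abs_nonneg p0, abs_nonneg p1]
    calc π * |Real.sqrt 3 * p0 + p1| ≤ 3.15 * (3 * n) :=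
          mul_le_mul hpihi.le (h1.trans h2) (abs_nonneg _) (by norm_num)
      _ ≤ 1 := by nlinarith
  -- pure-real facts first
  have hab1 : a + b = 2 * Real.sqrt 3 * π * p0 := by rw [ha_def, hb_def]; ring
  have hab2 : b - a = 2 * π * p1 := by rw [ha_def, hb_def]; ring
  have hsqarg : (a+b)^2/4 + 3*(b-a)^2/4 = 3 * π^2 * n^2 := by
    rw [hab1, hab2]
    linear_combination (π^2 * p0^2) * h3 - 3*π^2 * hn2
  have hsqrt : Real.sqrt ((a+b)^2/4 + 3*(b-a)^2/4) = Real.sqrt 3 * π * n := by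
    rw [hsqarg, show 3 * π^2 * n^2 = (Real.sqrt 3 * π * n)^2 by
      linear_combination (-(π^2 * n^2)) * h3]
    exact Real.sqrt_sq (by positivity)
  have hab_sq : a^2 + b^2 ≤ 6 * π^2 * n^2 := by
    have he : a^2 + b^2 = π^2*(2*(Real.sqrt 3)^2*p0^2 + 2*p1^2) := by
      rw [ha_def, hb_def]; ring
    rw [he, h3, hn2]
    have h4 : 0 ≤ π^2 * p1^2 := by positivity
    linarith
  set c := π / Real.sqrt 3 with hc_def
  have hc0 : 0 < c := by positivity
  have hc2 : c ≤ 2 := by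
    rw [hc_def, div_le_iff₀ hs3pos]; nlinarith
  have h3c : 3 * c = Real.sqrt 3 * π := by
    rw [hc_def]; field_simp; linear_combination (-1) * h3
  -- now invoke the complex estimate
  have hce := complex_est a b hap hbp
  rw [hsqrt] at hce
  have hce2 := hce.trans hab_sq
  set Z : ℂ := 1 + Complex.exp (((-(2*π/3) + a : ℝ) : ℂ) * Complex.I)
      + Complex.exp (((2*π/3 + b : ℝ) : ℂ) * Complex.I) with hZ_def
  have hsf : Real.sqrt (f (-(2*π/3) + a) (2*π/3 + b)) = ‖Z‖ / 3 := by
    have hf : f (-(2*π/3) + a) (2*π/3 + b) = (‖Z‖ / 3)^2 := by rw [f, hZ_def]; ring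
    rw [hf, Real.sqrt_sq (by positivity)]
  obtain ⟨g, hg_def⟩ : ∃ x : ℝ, ‖Z‖ = x := ⟨_, rfl⟩
  have hg0 : 0 ≤ g := hg_def ▸ norm_nonneg Z
  rw [hg_def] at hce2 hsf
  rw [hsf]
  clear hce hsf hg_def hZ_def hap hbp
  clear Z
  -- now everything is real arithmetic
  have hs_est : |g/3 - c * n| ≤ 2 * π^2 * n^2 := by
    have heq : g/3 - c * n = (g - Real.sqrt 3 * π * n) / 3 := by
      rw [← h3c]; ring
    rw [heq, abs_div, abs_of_pos (by norm_num : (0:ℝ) < 3)]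
    linarith
  obtain ⟨B, hB_def⟩ : ∃ x : ℝ, c * n = x := ⟨_, rfl⟩
  obtain ⟨sv, hsv_def⟩ : ∃ x : ℝ, g/3 = x := ⟨_, rfl⟩
  rw [hB_def] at hs_est ⊢
  rw [hsv_def] at hs_est ⊢
  have hsv0 : 0 ≤ sv := by rw [← hsv_def]; positivity
  have hB0 : 0 ≤ B := by rw [← hB_def]; positivity
  have hB2n : B ≤ 2 * n := by
    rw [← hB_def]
    have h1 : 0 ≤ (2 - c) * n := mul_nonneg (by linarith) hn0
    linarith
  have hB1 : B ≤ 1/25 := by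
    have := mul_le_mul hc2 hn100 hn0 (by norm_num : (0:ℝ) ≤ 2)
    rw [← hB_def]; linarith
  clear hc2 hc0 h3c hce2 hg0 hs3lo hs3hi hs3pos h3 hn2 hp0n hp1n hab1 hab2
  clear hsqarg hsqrt hab_sq hB_def hsv_def hc_def ha_def hb_def
  clear a b c g p0 p1
  have hnsq : n^2 ≤ 1/10000 := by nlinarith
  have hpin : π^2 * n^2 ≤ 9.9225 * n^2 := by nlinarith [sq_nonneg n]
  have hs_hi : sv ≤ 1/4 := by
    have h2 := (abs_le.1 hs_est).2
    nlinarith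
  have hsin_half : sv ≤ Real.sin (1/2) := by
    have := sin_lower (x := 1/2) (by norm_num) (by norm_num)
    linarith
  have hA_le : Real.arcsin sv ≤ 1/2 := by
    have h1 : Real.arcsin sv ≤ Real.arcsin (Real.sin (1/2)) :=
      Real.monotone_arcsin hsin_half
    rwa [Real.arcsin_sin (by linarith) (by linarith)] at h1
  have hA0 : 0 ≤ Real.arcsin sv := Real.arcsin_nonneg.2 hsv0
  have hsinA : Real.sin (Real.arcsin sv) = sv :=
    Real.sin_arcsin (by linarith) (by linarith)
  rw [Real.arccos_eq_pi_div_two_sub_arcsin]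
  rw [show π/2 - Real.arcsin sv - (π/2 - B) = B - Real.arcsin sv by ring]
  set A := Real.arcsin sv with hA_def
  have hsinB_lo : B - B^3/4 ≤ Real.sin B := sin_lower hB0 (by linarith)
  have hsinB_hi : Real.sin B ≤ B := Real.sin_le hB0
  have hB3 : B^3 ≤ 8 * n^2 * (1/100) := by
    calc B^3 ≤ (2*n)^3 := pow_le_pow_left₀ hB0 hB2n 3
      _ = 8 * n^2 * n := by ring
      _ ≤ 8 * n^2 * (1/100) := by
          have := mul_le_mul_of_nonneg_left hn100 (show (0:ℝ) ≤ 8 * n^2 by positivity)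
          linarith
  have hse := abs_le.1 hs_est
  rcases le_total A B with hAB | hAB
  · have key : B - A ≤ 4 * (Real.sin B - Real.sin A) := sin_bilip hA0 hAB (by linarith)
    rw [hA_def, hsinA] at key
    rw [abs_of_nonneg (by linarith)]
    linarith [hse.1]
  · have key : A - B ≤ 4 * (Real.sin A - Real.sin B) := sin_bilip hB0 hAB hA_le
    rw [hA_def, hsinA] at key
    rw [abs_of_nonpos (by linarith)]
    linarith [hse.2]
end

section
/- Let β ∈ ℝ and set c = cos(2πβ). For every y ∈ ℝ, there exists k ∈ ℝ such that y = |1 + exp(2πik) + exp(2πi(k + β))|² if and only if |y − 3 − 2c| ≤ 2√(2 + 2c). (This characterizes, for fixed quasi-momentum β along the zigzag direction, the set of values of 9cos²(√λ·L) corresponding to the essential spectrum of the truncated graph operators.) -/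
open Real

lemma stmt_7_aux (u v : ℝ) :
    (1 + Real.cos (u - v) + Real.cos (u + v)) * (1 + Real.cos (u - v) + Real.cos (u + v)) +
      (Real.sin (u - v) + Real.sin (u + v)) * (Real.sin (u - v) + Real.sin (u + v)) =
    3 + 2 * Real.cos (v + v) + 4 * Real.cos v * Real.cos u := by
  simp only [Real.cos_sub, Real.cos_add, Real.sin_sub, Real.sin_add]
  have a := Real.sin_sq_add_cos_sq u
  have b := Real.sin_sq_add_cos_sq v
  nlinarith [a, b]

lemma stmt_7_key (β k : ℝ) : ‖1 + Complex.exp (2 * π * k * Complex.I) +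
        Complex.exp (2 * π * (k + β) * Complex.I)‖ ^ 2
    = 3 + 2 * Real.cos (2*π*β) + 4 * Real.cos (π*β) * Real.cos (2*π*k + π*β) := by
  rw [Complex.sq_norm]
  simp [Complex.normSq_apply, Complex.exp_re, Complex.exp_im, Complex.add_re, Complex.add_im,
    Complex.mul_re, Complex.mul_im]
  have e1 := congrArg Real.cos (show 2*π*k = (2*π*k+π*β) - π*β by ring)
  have e2 := congrArg Real.cos (show 2*π*(k+β) = (2*π*k+π*β) + π*β by ring)
  have e3 := congrArg Real.sin (show 2*π*k = (2*π*k+π*β) - π*β by ring)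
  have e4 := congrArg Real.sin (show 2*π*(k+β) = (2*π*k+π*β) + π*β by ring)
  have e5 := congrArg Real.cos (show 2*π*β = π*β + π*β by ring)
  rw [e1, e2, e3, e4, e5, stmt_7_aux]

lemma stmt_7_sqrt (β : ℝ) :
    2 * Real.sqrt (2 + 2 * Real.cos (2 * π * β)) = 4 * |Real.cos (π * β)| := by
  have h : 2 + 2 * Real.cos (2 * π * β) = (2 * Real.cos (π * β)) ^ 2 := by
    have hc : Real.cos (2 * π * β) = 2 * Real.cos (π * β) ^ 2 - 1 := by
      rw [show 2 * π * β = 2 * (π * β) by ring, Real.cos_two_mul]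
    rw [hc]; ring
  rw [h, Real.sqrt_sq_eq_abs, abs_mul]
  norm_num
  ring

theorem stmt_7 (β y : ℝ) :
    (∃ k : ℝ, y = ‖1 + Complex.exp (2 * π * k * Complex.I) +
        Complex.exp (2 * π * (k + β) * Complex.I)‖ ^ 2) ↔
      |y - 3 - 2 * Real.cos (2 * π * β)| ≤ 2 * Real.sqrt (2 + 2 * Real.cos (2 * π * β)) := by
  rw [stmt_7_sqrt]
  constructor
  · rintro ⟨k, rfl⟩
    rw [stmt_7_key]
    have h : |(3 : ℝ) + 2 * Real.cos (2*π*β) + 4 * Real.cos (π*β) * Real.cos (2*π*k + π*β)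
        - 3 - 2 * Real.cos (2 * π * β)| = 4 * |Real.cos (π*β)| * |Real.cos (2*π*k + π*β)| := by
      rw [show (3 : ℝ) + 2 * Real.cos (2*π*β) + 4 * Real.cos (π*β) * Real.cos (2*π*k + π*β)
        - 3 - 2 * Real.cos (2 * π * β) = 4 * (Real.cos (π*β) * Real.cos (2*π*k + π*β)) by ring,
        abs_mul, abs_mul]
      norm_num; ring
    rw [h]
    have h1 : |Real.cos (2*π*k + π*β)| ≤ 1 := Real.abs_cos_le_one _
    nlinarith [abs_nonneg (Real.cos (π*β))]
  · intro h
    by_cases hc : Real.cos (π * β) = 0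
    · refine ⟨0, ?_⟩
      rw [stmt_7_key, hc]
      rw [hc] at h
      simp at h
      have : y - 3 - 2 * Real.cos (2 * π * β) = 0 := by
        have := abs_nonneg (y - 3 - 2 * Real.cos (2 * π * β))
        have h0 : |y - 3 - 2 * Real.cos (2 * π * β)| = 0 := le_antisymm (by simpa using h) this
        exact abs_eq_zero.mp h0
      linarith
    · set t := (y - 3 - 2 * Real.cos (2 * π * β)) / (4 * Real.cos (π * β)) with ht
      have hc4 : (4 : ℝ) * Real.cos (π * β) ≠ 0 := by positivity
      have habs : |t| ≤ 1 := by
        rw [ht, abs_div]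
        rw [div_le_one (by positivity)]
        calc |y - 3 - 2 * Real.cos (2 * π * β)| ≤ 4 * |Real.cos (π * β)| := h
          _ = |4 * Real.cos (π * β)| := by rw [abs_mul]; norm_num
      have ht1 : -1 ≤ t := neg_le_of_abs_le habs
      have ht2 : t ≤ 1 := le_of_abs_le habs
      refine ⟨(Real.arccos t - π * β) / (2 * π), ?_⟩
      rw [stmt_7_key]
      have hπ : (2 : ℝ) * π ≠ 0 := by positivity
      have : 2 * π * ((Real.arccos t - π * β) / (2 * π)) + π * β = Real.arccos t := by
        field_simp
        ring
      rw [this, Real.cos_arccos ht1 ht2, ht]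
      field_simp
      ring
end
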